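/- Let Z₁, Z₂, … be a label-conditionally exchangeable sequence of observations in X × Y with Y finite, let τ₁, τ₂, … be i.i.d. uniform on [0,1] independent of the observations, and let p be the label-conditional conformal transducer associated with a label-conditionally equivariant conformity measure A. Then for each fixed n, the p-value Pₙ := p(Z₁,…,Zₙ,τₙ), where p(z₁,…,zₙ,τ) := (|{i : yᵢ = yₙ, αᵢ < αₙ}| + τ|{i : yᵢ = yₙ, αᵢ = αₙ}|)/|{i : yᵢ = yₙ}| with (α₁,…,αₙ) = A(z₁,…,zₙ), is uniformly distributed on [0,1]. -/

import Mathlib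

open MeasureTheory Finset ProbabilityTheory


lemma LCP_min_sub_min_sum {ι : Type*} [DecidableEq ι] (c : ℝ) (hc : 0 ≤ c)
    (C : Finset ι) (f : ι → ℝ) :
    ∑ v ∈ C.image f, (min c ((C.filter (fun i => f i ≤ v)).card : ℝ)
      - min c ((C.filter (fun i => f i < v)).card : ℝ)) = min c (C.card : ℝ) := by
  induction C using Finset.strongInduction with
  | _ C ih =>
    rcases C.eq_empty_or_nonempty with rfl | hC
    · simp [min_eq_right hc]
    · have hV : (C.image f).Nonempty := hC.image f
      set v' := (C.image f).max' hV with hv'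
      have hv'mem : v' ∈ C.image f := (C.image f).max'_mem hV
      obtain ⟨i0, hi0, hfi0⟩ := Finset.mem_image.mp hv'mem
      set C' := C.filter (fun i => f i < v') with hC'
      have hle : ∀ i ∈ C, f i ≤ v' := fun i hi =>
        (C.image f).le_max' _ (Finset.mem_image_of_mem f hi)
      have hsub : C' ⊂ C := by
        refine Finset.ssubset_iff_of_subset (Finset.filter_subset _ _) |>.mpr ?_
        exact ⟨i0, hi0, by simp [hC', hfi0]⟩
      have himg : C'.image f = (C.image f).erase v' := by
        ext v
        simp only [Finset.mem_image, Finset.mem_erase, hC', Finset.mem_filter]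
        constructor
        · rintro ⟨i, ⟨hi, hlt⟩, rfl⟩
          exact ⟨ne_of_lt hlt, ⟨i, hi, rfl⟩⟩
        · rintro ⟨hne, i, hi, rfl⟩
          exact ⟨i, ⟨hi, lt_of_le_of_ne (hle i hi) hne⟩, rfl⟩
      have hfilter_le : ∀ v < v', C'.filter (fun i => f i ≤ v) = C.filter (fun i => f i ≤ v) := by
        intro v hv
        rw [hC', Finset.filter_filter]
        exact Finset.filter_congr (fun i hi => by
          constructor
          · rintro ⟨_, h⟩; exact h
          · intro h; exact ⟨lt_of_le_of_lt h hv, h⟩)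
      have hfilter_lt : ∀ v < v', C'.filter (fun i => f i < v) = C.filter (fun i => f i < v) := by
        intro v hv
        rw [hC', Finset.filter_filter]
        exact Finset.filter_congr (fun i hi => by
          constructor
          · rintro ⟨_, h⟩; exact h
          · intro h; exact ⟨lt_trans h hv, h⟩)
      have hCfull : C.filter (fun i => f i ≤ v') = C :=
        Finset.filter_true_of_mem hle
      have hCcard : (C.filter (fun i => f i < v')).card = C'.card := rfl
      rw [← Finset.add_sum_erase _ _ hv'mem, hCfull, hCcard]
      have : ∑ v ∈ (C.image f).erase v',
          (min c ((C.filter (fun i => f i ≤ v)).card : ℝ)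
            - min c ((C.filter (fun i => f i < v)).card : ℝ)) = min c (C'.card : ℝ) := by
        rw [← himg]
        rw [← ih C' hsub]
        refine Finset.sum_congr rfl (fun v hv => ?_)
        have hvlt : v < v' := by
          rw [himg] at hv
          have h1 := Finset.mem_erase.mp hv
          exact lt_of_le_of_ne ((C.image f).le_max' _ h1.2) h1.1
        rw [hfilter_le v hvlt, hfilter_lt v hvlt]
      rw [this]; ring

lemma LCP_sum_div_fiber {ι : Type*} [DecidableEq ι] (C : Finset ι) (f : ι → ℝ) (g : ℝ → ℝ) :
    ∑ j ∈ C, g (f j) / ((C.filter (fun i => f i = f j)).card : ℝ)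
      = ∑ v ∈ C.image f, g v := by
  rw [← Finset.sum_fiberwise_of_maps_to (fun j hj => Finset.mem_image_of_mem f hj)
    (fun j => g (f j) / ((C.filter (fun i => f i = f j)).card : ℝ))]
  refine Finset.sum_congr rfl (fun v hv => ?_)
  obtain ⟨i0, hi0, rfl⟩ := Finset.mem_image.mp hv
  have hcongr : ∀ j ∈ C.filter (fun j => f j = f i0),
      g (f j) / ((C.filter (fun i => f i = f j)).card : ℝ)
        = g (f i0) / ((C.filter (fun i => f i = f i0)).card : ℝ) := by
    intro j hj
    have hfj : f j = f i0 := (Finset.mem_filter.mp hj).2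
    rw [hfj]
  rw [Finset.sum_congr rfl hcongr, Finset.sum_const]
  have hcardpos : 0 < (C.filter (fun i => f i = f i0)).card :=
    Finset.card_pos.mpr ⟨i0, Finset.mem_filter.mpr ⟨hi0, rfl⟩⟩
  rw [nsmul_eq_mul]
  field_simp

lemma LCP_key_sum {ι : Type*} [DecidableEq ι] (C : Finset ι) (f : ι → ℝ) (c : ℝ)
    (hc0 : 0 ≤ c) (hcN : c ≤ (C.card : ℝ)) :
    ∑ j ∈ C, (min c ((C.filter (fun i => f i ≤ f j)).card : ℝ)
      - min c ((C.filter (fun i => f i < f j)).card : ℝ))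
        / ((C.filter (fun i => f i = f j)).card : ℝ) = c := by
  have := LCP_sum_div_fiber C f (fun v => min c ((C.filter (fun i => f i ≤ v)).card : ℝ)
      - min c ((C.filter (fun i => f i < v)).card : ℝ))
  rw [this, LCP_min_sub_min_sum c hc0 C f, min_eq_left hcN]

lemma LCP_unif_Iic (a : ℝ) :
    (volume.restrict (Set.Icc (0:ℝ) 1)) (Set.Iic a) = ENNReal.ofReal (min a 1) := by
  rw [Measure.restrict_apply measurableSet_Iic]
  have h : Set.Iic a ∩ Set.Icc 0 1 = Set.Icc 0 (min a 1) := by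
    ext x
    simp only [Set.mem_inter_iff, Set.mem_Iic, Set.mem_Icc, le_min_iff]
    tauto
  rw [h, Real.volume_Icc, sub_zero]

lemma LCP_ofReal_clamp (c b m : ℝ) (hm : 0 < m) :
    ENNReal.ofReal (min ((c - b) / m) 1) = ENNReal.ofReal ((min c (b + m) - min c b) / m) := by
  rcases le_total c b with hcb | hcb
  · have h1 : (c - b) / m ≤ 0 := div_nonpos_of_nonpos_of_nonneg (by linarith) hm.le
    have h2 : min c (b + m) = c := min_eq_left (by linarith)
    have h3 : min c b = c := min_eq_left hcb
    rw [h2, h3]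
    simp only [sub_self, zero_div]
    rw [ENNReal.ofReal_eq_zero.mpr (le_trans (min_le_left _ _) h1)]
    simp
  · have h3 : min c b = b := min_eq_right hcb
    rcases le_total c (b + m) with hcm | hcm
    · have h2 : min c (b + m) = c := min_eq_left hcm
      rw [h2, h3]
      congr 1
      rw [min_eq_left]
      rw [div_le_one hm]; linarith
    · have h2 : min c (b + m) = b + m := min_eq_right hcm
      rw [h2, h3]
      have : (b + m - b) / m = 1 := by field_simp; ring
      rw [this, min_eq_right]
      rw [le_div_iff₀ hm]; linarith

lemma LCP_inner_sum {ι : Type*} [DecidableEq ι] (C : Finset ι) (hC : C.Nonempty)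
    (f : ι → ℝ) (t : ℝ) (ht0 : 0 ≤ t) (ht1 : t ≤ 1) :
    ∑ j ∈ C, (volume.restrict (Set.Icc (0:ℝ) 1))
      {u : ℝ | (((C.filter fun i => f i < f j).card : ℝ)
        + u * ((C.filter fun i => f i = f j).card : ℝ)) / (C.card : ℝ) ≤ t}
      = ENNReal.ofReal (t * C.card) := by
  have hN : (0:ℝ) < C.card := by exact_mod_cast Finset.card_pos.mpr hC
  set c : ℝ := t * C.card with hc
  have hterm : ∀ j ∈ C,
      (volume.restrict (Set.Icc (0:ℝ) 1))
        {u : ℝ | (((C.filter fun i => f i < f j).card : ℝ)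
          + u * ((C.filter fun i => f i = f j).card : ℝ)) / (C.card : ℝ) ≤ t}
      = ENNReal.ofReal ((min c ((C.filter fun i => f i ≤ f j).card : ℝ)
          - min c ((C.filter fun i => f i < f j).card : ℝ))
          / ((C.filter fun i => f i = f j).card : ℝ)) := by
    intro j hj
    set b : ℝ := ((C.filter fun i => f i < f j).card : ℝ) with hbdef
    set m : ℝ := ((C.filter fun i => f i = f j).card : ℝ) with hmdef
    have hm : (0:ℝ) < m := by
      have h0 : 0 < (C.filter fun i => f i = f j).card :=
        Finset.card_pos.mpr ⟨j, Finset.mem_filter.mpr ⟨hj, rfl⟩⟩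
      rw [hmdef]; exact_mod_cast h0
    have hLem : ((C.filter fun i => f i ≤ f j).card : ℝ) = b + m := by
      have hsplit : C.filter (fun i => f i ≤ f j)
          = C.filter (fun i => f i < f j) ∪ C.filter (fun i => f i = f j) := by
        rw [← Finset.filter_or]
        exact Finset.filter_congr (fun i _ => by
          simp only [le_iff_lt_or_eq])
      have hdisj : Disjoint (C.filter (fun i => f i < f j)) (C.filter (fun i => f i = f j)) := by
        refine Finset.disjoint_filter_filter' _ _ ?_
        intro p hp1 hp2 i hi
        exact absurd (hp2 i hi) (ne_of_lt (hp1 i hi))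
      rw [hsplit, Finset.card_union_of_disjoint hdisj]
      push_cast; ring
    have hset : {u : ℝ | (b + u * m) / (C.card : ℝ) ≤ t} = Set.Iic ((c - b) / m) := by
      ext u
      simp only [Set.mem_setOf_eq, Set.mem_Iic]
      rw [div_le_iff₀ hN, le_div_iff₀ hm, hc]
      constructor <;> intro h <;> linarith
    rw [hset, LCP_unif_Iic, LCP_ofReal_clamp c b m hm, hLem]
  rw [Finset.sum_congr rfl hterm]
  have hnonneg : ∀ j ∈ C, 0 ≤ (min c ((C.filter fun i => f i ≤ f j).card : ℝ)
      - min c ((C.filter fun i => f i < f j).card : ℝ))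
      / ((C.filter fun i => f i = f j).card : ℝ) := by
    intro j hj
    apply div_nonneg _ (Nat.cast_nonneg _)
    have hle2 : ((C.filter fun i => f i < f j).card : ℝ)
        ≤ ((C.filter fun i => f i ≤ f j).card : ℝ) := by
      have hsub : (C.filter fun i => f i < f j) ⊆ (C.filter fun i => f i ≤ f j) := by
        intro i hi
        simp only [Finset.mem_filter] at hi ⊢
        exact ⟨hi.1, hi.2.le⟩
      exact_mod_cast Finset.card_le_card hsub
    linarith [min_le_min (le_refl c) hle2]
  rw [← ENNReal.ofReal_sum_of_nonneg hnonneg]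
  congr 1
  rw [LCP_key_sum C f c (mul_nonneg ht0 hN.le)
    (by rw [hc]; nlinarith)]
lemma LCP_measurable_card {δ : Type*} [MeasurableSpace δ] {k : ℕ} (p : Fin k → δ → Prop)
    [∀ i z, Decidable (p i z)] (hp : ∀ i, MeasurableSet {z | p i z}) :
    Measurable (fun z => ((Finset.univ.filter fun i => p i z).card : ℝ)) := by
  have h : (fun z => ((Finset.univ.filter fun i => p i z).card : ℝ))
      = fun z => ∑ i : Fin k, if p i z then (1:ℝ) else 0 := by
    funext z
    rw [Finset.card_filter]
    push_cast
    simp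
  rw [h]
  exact Finset.measurable_sum _ fun i _ =>
    Measurable.ite (hp i) measurable_const measurable_const

lemma LCP_card_filter_perm {ι : Type*} [Fintype ι] [DecidableEq ι] (π : Equiv.Perm ι)
    (p : ι → Prop) [DecidablePred p] :
    (Finset.univ.filter fun i => p (π i)).card = (Finset.univ.filter p).card := by
  apply Finset.card_bij (fun i _ => π i)
  · intro a ha; simp only [Finset.mem_filter, Finset.mem_univ, true_and] at ha ⊢; exact ha
  · intro a _ b _ h; exact π.injective h
  · intro b hb
    refine ⟨π.symm b, ?_, by simp⟩
    simp only [Finset.mem_filter, Finset.mem_univ, true_and] at hb ⊢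
    simpa using hb

open ENNReal NNReal
set_option maxHeartbeats 2000000

/-- Proposition 1, fixed `n`: For a label-conditionally
exchangeable family `Z 0, …, Z n` of observations, `τ` uniform on `[0,1]`
independent of the observations, and `A` a label-conditionally equivariant
conformity measure, the label-conditional conformal p-value
`P = (|{i : y i = y last, α i < α last}| + τ·|{i : y i = y last, α i = α last}|)
/ |{i : y i = y last}|` is uniformly distributed on `[0,1]`. -/
theorem label_conditional_pvalue_uniform
    {Ω 𝓧 𝓨 : Type*} [MeasurableSpace Ω] [MeasurableSpace 𝓧]
    [Fintype 𝓨] [DecidableEq 𝓨] [MeasurableSpace 𝓨] [MeasurableSingletonClass 𝓨]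
    (μ : Measure Ω) [IsProbabilityMeasure μ] (n : ℕ)
    (Z : Fin (n + 1) → Ω → 𝓧 × 𝓨) (hZmeas : ∀ i, Measurable (Z i))
    (hexch : ∀ (π : Equiv.Perm (Fin (n + 1))) (y : Fin (n + 1) → 𝓨)
        (E : Fin (n + 1) → Set 𝓧),
      (∀ i, MeasurableSet (E i)) → (∀ i, y i = y (π i)) →
      μ {ω | (∀ i, (Z i ω).2 = y i) ∧ ∀ i, (Z i ω).1 ∈ E i}
        = μ {ω | (∀ i, (Z i ω).2 = y i) ∧ ∀ i, (Z (π i) ω).1 ∈ E i})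
    (A : (Fin (n + 1) → 𝓧 × 𝓨) → (Fin (n + 1) → ℝ)) (hAmeas : Measurable A)
    (hequiv : ∀ (π : Equiv.Perm (Fin (n + 1))) (z : Fin (n + 1) → 𝓧 × 𝓨),
      (∀ i, (z i).2 = (z (π i)).2) →
      A (fun i => z (π i)) = fun i => A z (π i))
    (τ : Ω → ℝ) (hτmeas : Measurable τ)
    (hτunif : Measure.map τ μ = volume.restrict (Set.Icc (0 : ℝ) 1))
    (hindep : IndepFun τ (fun ω => fun i => Z i ω) μ)
    (α : Fin (n + 1) → Ω → ℝ) (hα : α = fun i ω => A (fun j => Z j ω) i)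
    (P : Ω → ℝ)
    (hP : P = fun ω =>
      (((Finset.univ.filter (fun i : Fin (n + 1) =>
          (Z i ω).2 = (Z (Fin.last n) ω).2
            ∧ α i ω < α (Fin.last n) ω)).card : ℝ)
        + τ ω * ((Finset.univ.filter (fun i : Fin (n + 1) =>
          (Z i ω).2 = (Z (Fin.last n) ω).2
            ∧ α i ω = α (Fin.last n) ω)).card : ℝ))
        / ((Finset.univ.filter (fun i : Fin (n + 1) =>
          (Z i ω).2 = (Z (Fin.last n) ω).2)).card : ℝ)) :
    Measure.map P μ = volume.restrict (Set.Icc (0 : ℝ) 1) := by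
  subst hα
  subst hP
  -- basic objects
  set Zv : Ω → (Fin (n + 1) → 𝓧 × 𝓨) := fun ω => fun i => Z i ω with hZv_def
  have hZv : Measurable Zv := measurable_pi_lambda _ hZmeas
  set ν : Measure ℝ := volume.restrict (Set.Icc (0 : ℝ) 1) with hν_def
  set ρ : Measure (Fin (n + 1) → 𝓧 × 𝓨) := μ.map Zv with hρ_def
  -- the conformal transducer as a function of (z, j, u)
  set G : (Fin (n + 1) → 𝓧 × 𝓨) → Fin (n + 1) → ℝ → ℝ := fun z j u =>
    (((Finset.univ.filter (fun i : Fin (n + 1) =>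
        (z i).2 = (z (Fin.last n)).2 ∧ A z i < A z j)).card : ℝ)
      + u * ((Finset.univ.filter (fun i : Fin (n + 1) =>
        (z i).2 = (z (Fin.last n)).2 ∧ A z i = A z j)).card : ℝ))
      / ((Finset.univ.filter (fun i : Fin (n + 1) =>
        (z i).2 = (z (Fin.last n)).2)).card : ℝ) with hG_def
  -- measurability facts
  have hlabset : ∀ (i i' : Fin (n + 1)), MeasurableSet {z : (Fin (n + 1) → 𝓧 × 𝓨) | (z i).2 = (z i').2} := by
    intro i i'
    have : {z : (Fin (n + 1) → 𝓧 × 𝓨) | (z i).2 = (z i').2}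
        = ⋃ c : 𝓨, ((fun z : (Fin (n + 1) → 𝓧 × 𝓨) => (z i).2) ⁻¹' {c}) ∩ ((fun z : (Fin (n + 1) → 𝓧 × 𝓨) => (z i').2) ⁻¹' {c}) := by
      ext z
      simp only [Set.mem_setOf_eq, Set.mem_iUnion, Set.mem_inter_iff, Set.mem_preimage,
        Set.mem_singleton_iff]
      constructor
      · intro h; exact ⟨(z i').2, h, rfl⟩
      · rintro ⟨c, h1, h2⟩; rw [h1, h2]
    rw [this]
    exact MeasurableSet.iUnion fun c =>
      ((measurable_snd.comp (measurable_pi_apply i)) (measurableSet_singleton c)).inter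
        ((measurable_snd.comp (measurable_pi_apply i')) (measurableSet_singleton c))
  have hAi : ∀ i : Fin (n + 1), Measurable (fun z : (Fin (n + 1) → 𝓧 × 𝓨) => A z i) := fun i =>
    (measurable_pi_apply i).comp hAmeas
  have hGmeas : ∀ j, Measurable (fun p : (Fin (n + 1) → 𝓧 × 𝓨) × ℝ => G p.1 j p.2) := by
    intro j
    have h1 : Measurable (fun z : (Fin (n + 1) → 𝓧 × 𝓨) => ((Finset.univ.filter (fun i : Fin (n + 1) =>
        (z i).2 = (z (Fin.last n)).2 ∧ A z i < A z j)).card : ℝ)) := by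
      apply LCP_measurable_card
      intro i
      exact (hlabset i (Fin.last n)).inter (measurableSet_lt (hAi i) (hAi j))
    have h2 : Measurable (fun z : (Fin (n + 1) → 𝓧 × 𝓨) => ((Finset.univ.filter (fun i : Fin (n + 1) =>
        (z i).2 = (z (Fin.last n)).2 ∧ A z i = A z j)).card : ℝ)) := by
      apply LCP_measurable_card
      intro i
      exact (hlabset i (Fin.last n)).inter (measurableSet_eq_fun (hAi i) (hAi j))
    have h3 : Measurable (fun z : (Fin (n + 1) → 𝓧 × 𝓨) => ((Finset.univ.filter (fun i : Fin (n + 1) =>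
        (z i).2 = (z (Fin.last n)).2)).card : ℝ)) := by
      apply LCP_measurable_card
      intro i
      exact hlabset i (Fin.last n)
    exact ((h1.comp measurable_fst).add
      (measurable_snd.mul (h2.comp measurable_fst))).div (h3.comp measurable_fst)
  have hPG : (fun ω =>
      (((Finset.univ.filter (fun i : Fin (n + 1) =>
          (Z i ω).2 = (Z (Fin.last n) ω).2
            ∧ A (fun j => Z j ω) i < A (fun j => Z j ω) (Fin.last n))).card : ℝ)
        + τ ω * ((Finset.univ.filter (fun i : Fin (n + 1) =>
          (Z i ω).2 = (Z (Fin.last n) ω).2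
            ∧ A (fun j => Z j ω) i = A (fun j => Z j ω) (Fin.last n))).card : ℝ))
        / ((Finset.univ.filter (fun i : Fin (n + 1) =>
          (Z i ω).2 = (Z (Fin.last n) ω).2)).card : ℝ))
      = fun ω => G (Zv ω) (Fin.last n) (τ ω) := by
    funext ω
    simp only [hG_def, hZv_def]
  rw [hPG]
  have hPmeas : Measurable (fun ω => G (Zv ω) (Fin.last n) (τ ω)) := by
    have h := (hGmeas (Fin.last n)).comp (hZv.prodMk hτmeas)
    exact h
  -- the joint law is a product
  have hΛ : μ.map (fun ω => (Zv ω, τ ω)) = ρ.prod ν := by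
    rw [hρ_def, ← hτunif]
    exact (indepFun_iff_map_prod_eq_prod_map_map hZv.aemeasurable hτmeas.aemeasurable).mp
      hindep.symm
  -- label-pattern events
  have hEymeas : ∀ y : Fin (n + 1) → 𝓨, MeasurableSet {ω | ∀ i, (Z i ω).2 = y i} := by
    intro y
    have : {ω | ∀ i, (Z i ω).2 = y i} = ⋂ i, (fun ω => (Z i ω).2) ⁻¹' {y i} := by
      ext ω; simp [Set.mem_iInter]
    rw [this]
    exact MeasurableSet.iInter fun i =>
      (measurable_snd.comp (hZmeas i)) (measurableSet_singleton (y i))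
  have hLymeas : ∀ y : Fin (n + 1) → 𝓨, MeasurableSet {z : (Fin (n + 1) → 𝓧 × 𝓨) | ∀ i, (z i).2 = y i} := by
    intro y
    have : {z : (Fin (n + 1) → 𝓧 × 𝓨) | ∀ i, (z i).2 = y i} = ⋂ i, (fun z : (Fin (n + 1) → 𝓧 × 𝓨) => (z i).2) ⁻¹' {y i} := by
      ext z; simp [Set.mem_iInter]
    rw [this]
    exact MeasurableSet.iInter fun i =>
      (measurable_snd.comp (measurable_pi_apply i)) (measurableSet_singleton (y i))
  -- decomposition over label patterns
  have hdecomp : ∀ s : Set Ω, MeasurableSet s →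
      μ s = ∑ y : Fin (n + 1) → 𝓨, μ (s ∩ {ω | ∀ i, (Z i ω).2 = y i}) := by
    intro s hs
    have hcover : s = ⋃ y : Fin (n + 1) → 𝓨, s ∩ {ω | ∀ i, (Z i ω).2 = y i} := by
      ext ω
      simp only [Set.mem_iUnion, Set.mem_inter_iff, Set.mem_setOf_eq]
      constructor
      · intro h; exact ⟨fun i => (Z i ω).2, h, fun i => rfl⟩
      · rintro ⟨y, h, _⟩; exact h
    conv_lhs => rw [hcover]
    rw [measure_iUnion ?_ (fun y => hs.inter (hEymeas y)), tsum_fintype]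
    intro y y' hyy'
    simp only [Function.onFun]
    rw [Set.disjoint_left]
    rintro ω ⟨_, h1⟩ ⟨_, h2⟩
    exact hyy' (funext fun i => (h1 i).symm.trans (h2 i))
  -- the key uniform computation for t ∈ [0, 1]
  have key : ∀ t : ℝ, 0 ≤ t → t ≤ 1 →
      μ {ω | G (Zv ω) (Fin.last n) (τ ω) ≤ t} = ENNReal.ofReal t := by
    intro t ht0 ht1
    have hSmeas : ∀ j : Fin (n + 1),
        MeasurableSet {p : (Fin (n + 1) → 𝓧 × 𝓨) × ℝ | G p.1 j p.2 ≤ t} := by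
      intro j
      have h := measurableSet_le (hGmeas j) (measurable_const (a := t))
      exact h
    -- representation through the product measure
    have hrep : ∀ (y : Fin (n + 1) → 𝓨) (j : Fin (n + 1)),
        μ ({ω | G (Zv ω) j (τ ω) ≤ t} ∩ {ω | ∀ i, (Z i ω).2 = y i})
          = ∫⁻ z in {z : Fin (n + 1) → 𝓧 × 𝓨 | ∀ i, (z i).2 = y i},
              ν (Prod.mk z ⁻¹' {p : (Fin (n + 1) → 𝓧 × 𝓨) × ℝ | G p.1 j p.2 ≤ t}) ∂ρ := by
      intro y j
      have hjoint : Measurable (fun ω => (Zv ω, τ ω)) := hZv.prodMk hτmeas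
      have hbig : MeasurableSet ({p : (Fin (n + 1) → 𝓧 × 𝓨) × ℝ | G p.1 j p.2 ≤ t}
          ∩ ({z : Fin (n + 1) → 𝓧 × 𝓨 | ∀ i, (z i).2 = y i} ×ˢ (Set.univ : Set ℝ))) :=
        (hSmeas j).inter ((hLymeas y).prod MeasurableSet.univ)
      have h1 : {ω | G (Zv ω) j (τ ω) ≤ t} ∩ {ω | ∀ i, (Z i ω).2 = y i}
          = (fun ω => (Zv ω, τ ω)) ⁻¹' ({p : (Fin (n + 1) → 𝓧 × 𝓨) × ℝ | G p.1 j p.2 ≤ t}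
            ∩ ({z : Fin (n + 1) → 𝓧 × 𝓨 | ∀ i, (z i).2 = y i} ×ˢ (Set.univ : Set ℝ))) := by
        ext ω
        simp only [Set.mem_inter_iff, Set.mem_setOf_eq, Set.mem_preimage, Set.mem_prod,
          Set.mem_univ, and_true, hZv_def]
      rw [h1, ← Measure.map_apply hjoint hbig, hΛ, Measure.prod_apply hbig]
      have h2 : ∀ z : Fin (n + 1) → 𝓧 × 𝓨,
          ν (Prod.mk z ⁻¹' ({p : (Fin (n + 1) → 𝓧 × 𝓨) × ℝ | G p.1 j p.2 ≤ t}
            ∩ ({z : Fin (n + 1) → 𝓧 × 𝓨 | ∀ i, (z i).2 = y i} ×ˢ (Set.univ : Set ℝ))))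
          = Set.indicator {z : Fin (n + 1) → 𝓧 × 𝓨 | ∀ i, (z i).2 = y i}
              (fun z => ν (Prod.mk z ⁻¹' {p : (Fin (n + 1) → 𝓧 × 𝓨) × ℝ | G p.1 j p.2 ≤ t})) z := by
        intro z
        by_cases hz : z ∈ {z : Fin (n + 1) → 𝓧 × 𝓨 | ∀ i, (z i).2 = y i}
        · rw [Set.indicator_of_mem hz]
          congr 1
          ext u
          simp only [Set.mem_preimage, Set.mem_inter_iff, Set.mem_setOf_eq, Set.mem_prod,
            Set.mem_univ, and_true]
          exact and_iff_left hz
        · rw [Set.indicator_of_notMem hz]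
          have he : Prod.mk z ⁻¹' ({p : (Fin (n + 1) → 𝓧 × 𝓨) × ℝ | G p.1 j p.2 ≤ t}
              ∩ ({z : Fin (n + 1) → 𝓧 × 𝓨 | ∀ i, (z i).2 = y i} ×ˢ (Set.univ : Set ℝ)))
              = (∅ : Set ℝ) := by
            ext u
            simp only [Set.mem_preimage, Set.mem_inter_iff, Set.mem_setOf_eq, Set.mem_prod,
              Set.mem_univ, and_true, Set.mem_empty_iff_false, iff_false, not_and]
            intro _
            exact hz
          rw [he]
          exact measure_empty
      rw [lintegral_congr h2, lintegral_indicator (hLymeas y)]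
    -- exchange step: swapping `last` with any `j` in the same label class
    have hswap : ∀ (y : Fin (n + 1) → 𝓨) (j : Fin (n + 1)), y j = y (Fin.last n) →
        ∫⁻ z in {z : Fin (n + 1) → 𝓧 × 𝓨 | ∀ i, (z i).2 = y i},
            ν (Prod.mk z ⁻¹' {p : (Fin (n + 1) → 𝓧 × 𝓨) × ℝ | G p.1 (Fin.last n) p.2 ≤ t}) ∂ρ
        = ∫⁻ z in {z : Fin (n + 1) → 𝓧 × 𝓨 | ∀ i, (z i).2 = y i},
            ν (Prod.mk z ⁻¹' {p : (Fin (n + 1) → 𝓧 × 𝓨) × ℝ | G p.1 j p.2 ≤ t}) ∂ρ := by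
      intro y j hyj
      set π : Equiv.Perm (Fin (n + 1)) := Equiv.swap (Fin.last n) j with hπ_def
      have hyπ : ∀ i, y i = y (π i) := by
        intro i
        rw [hπ_def, Equiv.swap_apply_def]
        split_ifs with h1 h2
        · rw [h1, hyj]
        · rw [h2, hyj]
        · rfl
      have hπlast : π (Fin.last n) = j := Equiv.swap_apply_left _ _
      set Tπ : (Fin (n + 1) → 𝓧 × 𝓨) → (Fin (n + 1) → 𝓧 × 𝓨) :=
        fun z => fun i => z (π i) with hTπ_def
      have hTπmeas : Measurable Tπ :=
        measurable_pi_lambda _ (fun i => measurable_pi_apply (π i))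
      have hρprob : IsProbabilityMeasure ρ := by
        rw [hρ_def]; exact Measure.isProbabilityMeasure_map hZv.aemeasurable
      -- invariance of the label-restricted law under Tπ
      have hinv : (ρ.restrict {z : Fin (n + 1) → 𝓧 × 𝓨 | ∀ i, (z i).2 = y i}).map Tπ
          = ρ.restrict {z : Fin (n + 1) → 𝓧 × 𝓨 | ∀ i, (z i).2 = y i} := by
        refine ext_of_generate_finite _ generateFrom_pi.symm isPiSystem_pi ?_ ?_
        · rintro s ⟨S, hS, rfl⟩
          have hSm : ∀ i, MeasurableSet (S i) := fun i => hS i (Set.mem_univ i)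
          have hSpim : MeasurableSet (Set.pi Set.univ S) :=
            MeasurableSet.pi (Set.to_countable _) (fun i _ => hSm i)
          set E : Fin (n + 1) → Set 𝓧 := fun i => (fun x => (x, y i)) ⁻¹' S i with hE_def
          have hE : ∀ i, MeasurableSet (E i) := fun i =>
            (measurable_id.prodMk measurable_const) (hSm i)
          have hmem_iff : ∀ (w : 𝓧 × 𝓨) i, w.2 = y i → (w ∈ S i ↔ w.1 ∈ E i) := by
            intro w i hw
            rw [hE_def]
            simp only [Set.mem_preimage]
            rw [← hw, Prod.mk.eta]
          rw [Measure.map_apply hTπmeas hSpim,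
            Measure.restrict_apply (hTπmeas hSpim),
            Measure.restrict_apply hSpim, hρ_def,
            Measure.map_apply hZv ((hTπmeas hSpim).inter (hLymeas y)),
            Measure.map_apply hZv (hSpim.inter (hLymeas y))]
          have e1 : Zv ⁻¹' (Tπ ⁻¹' Set.pi Set.univ S
              ∩ {z : Fin (n + 1) → 𝓧 × 𝓨 | ∀ i, (z i).2 = y i})
              = {ω | (∀ i, (Z i ω).2 = y i) ∧ ∀ i, (Z (π i) ω).1 ∈ E i} := by
            ext ω
            simp only [Set.mem_preimage, Set.mem_inter_iff, Set.mem_setOf_eq, Set.mem_pi,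
              Set.mem_univ, forall_true_left, hTπ_def, hZv_def, true_implies]
            constructor
            · rintro ⟨hmem, hlab⟩
              refine ⟨hlab, fun i => ?_⟩
              exact (hmem_iff (Z (π i) ω) i (by rw [hlab (π i), ← hyπ i])).mp (hmem i)
            · rintro ⟨hlab, hmem⟩
              refine ⟨fun i => ?_, hlab⟩
              exact (hmem_iff (Z (π i) ω) i (by rw [hlab (π i), ← hyπ i])).mpr (hmem i)
          have e2 : Zv ⁻¹' (Set.pi Set.univ S
              ∩ {z : Fin (n + 1) → 𝓧 × 𝓨 | ∀ i, (z i).2 = y i})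
              = {ω | (∀ i, (Z i ω).2 = y i) ∧ ∀ i, (Z i ω).1 ∈ E i} := by
            ext ω
            simp only [Set.mem_preimage, Set.mem_inter_iff, Set.mem_setOf_eq, Set.mem_pi,
              Set.mem_univ, forall_true_left, hZv_def, true_implies]
            constructor
            · rintro ⟨hmem, hlab⟩
              refine ⟨hlab, fun i => ?_⟩
              exact (hmem_iff (Z i ω) i (hlab i)).mp (hmem i)
            · rintro ⟨hlab, hmem⟩
              refine ⟨fun i => ?_, hlab⟩
              exact (hmem_iff (Z i ω) i (hlab i)).mpr (hmem i)
          rw [e1, e2]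
          exact (hexch π y E hE hyπ).symm
        · rw [Measure.map_apply hTπmeas MeasurableSet.univ, Set.preimage_univ]
      -- change of variables
      have hgmeas : Measurable (fun z : Fin (n + 1) → 𝓧 × 𝓨 =>
          ν (Prod.mk z ⁻¹' {p : (Fin (n + 1) → 𝓧 × 𝓨) × ℝ | G p.1 (Fin.last n) p.2 ≤ t})) :=
        measurable_measure_prodMk_left (hSmeas (Fin.last n))
      calc ∫⁻ z in {z : Fin (n + 1) → 𝓧 × 𝓨 | ∀ i, (z i).2 = y i},
            ν (Prod.mk z ⁻¹' {p : (Fin (n + 1) → 𝓧 × 𝓨) × ℝ | G p.1 (Fin.last n) p.2 ≤ t}) ∂ρ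
          = ∫⁻ z, ν (Prod.mk z ⁻¹' {p : (Fin (n + 1) → 𝓧 × 𝓨) × ℝ | G p.1 (Fin.last n) p.2 ≤ t})
              ∂((ρ.restrict {z : Fin (n + 1) → 𝓧 × 𝓨 | ∀ i, (z i).2 = y i}).map Tπ) := by
            rw [hinv]
        _ = ∫⁻ z, ν (Prod.mk (Tπ z) ⁻¹'
              {p : (Fin (n + 1) → 𝓧 × 𝓨) × ℝ | G p.1 (Fin.last n) p.2 ≤ t})
              ∂(ρ.restrict {z : Fin (n + 1) → 𝓧 × 𝓨 | ∀ i, (z i).2 = y i}) := by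
            rw [lintegral_map hgmeas hTπmeas]
        _ = ∫⁻ z in {z : Fin (n + 1) → 𝓧 × 𝓨 | ∀ i, (z i).2 = y i},
              ν (Prod.mk z ⁻¹' {p : (Fin (n + 1) → 𝓧 × 𝓨) × ℝ | G p.1 j p.2 ≤ t}) ∂ρ := by
            refine setLIntegral_congr_fun (hLymeas y) ?_
            intro z hz
            refine congrArg ν ?_
            have hzj : (z j).2 = (z (Fin.last n)).2 := by
              rw [hz j, hz (Fin.last n), hyj]
            have hA' : A (fun i => z (π i)) = fun i => A z (π i) := by
              refine hequiv π z (fun i => ?_)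
              rw [hz i, hz (π i), ← hyπ i]
            have hGswap : ∀ u : ℝ, G (Tπ z) (Fin.last n) u = G z j u := by
              intro u
              simp only [hG_def, hTπ_def, hA', hπlast, hzj]
              rw [LCP_card_filter_perm π
                  (fun k => (z k).2 = (z (Fin.last n)).2 ∧ A z k < A z j),
                LCP_card_filter_perm π
                  (fun k => (z k).2 = (z (Fin.last n)).2 ∧ A z k = A z j),
                LCP_card_filter_perm π
                  (fun k => (z k).2 = (z (Fin.last n)).2)]
            ext u
            simp only [Set.mem_preimage, Set.mem_setOf_eq, hGswap]
    -- per-pattern computation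
    have hper : ∀ y : Fin (n + 1) → 𝓨,
        μ ({ω | G (Zv ω) (Fin.last n) (τ ω) ≤ t} ∩ {ω | ∀ i, (Z i ω).2 = y i})
          = ENNReal.ofReal t * μ {ω | ∀ i, (Z i ω).2 = y i} := by
      intro y
      set Cy : Finset (Fin (n + 1)) :=
        Finset.univ.filter (fun i => y i = y (Fin.last n)) with hCy_def
      have hlastCy : Fin.last n ∈ Cy := by
        rw [hCy_def]; exact Finset.mem_filter.mpr ⟨Finset.mem_univ _, rfl⟩
      have hCyne : Cy.Nonempty := ⟨_, hlastCy⟩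
      have hNpos : 0 < Cy.card := Finset.card_pos.mpr hCyne
      have hj_eq : ∀ j ∈ Cy,
          μ ({ω | G (Zv ω) (Fin.last n) (τ ω) ≤ t} ∩ {ω | ∀ i, (Z i ω).2 = y i})
            = ∫⁻ z in {z : Fin (n + 1) → 𝓧 × 𝓨 | ∀ i, (z i).2 = y i},
                ν (Prod.mk z ⁻¹' {p : (Fin (n + 1) → 𝓧 × 𝓨) × ℝ | G p.1 j p.2 ≤ t}) ∂ρ := by
        intro j hj
        rw [hrep y (Fin.last n)]
        refine hswap y j ?_
        rw [hCy_def] at hj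
        exact (Finset.mem_filter.mp hj).2
      have h1 : (Cy.card : ℝ≥0∞)
            * μ ({ω | G (Zv ω) (Fin.last n) (τ ω) ≤ t} ∩ {ω | ∀ i, (Z i ω).2 = y i})
          = ∑ j ∈ Cy, ∫⁻ z in {z : Fin (n + 1) → 𝓧 × 𝓨 | ∀ i, (z i).2 = y i},
              ν (Prod.mk z ⁻¹' {p : (Fin (n + 1) → 𝓧 × 𝓨) × ℝ | G p.1 j p.2 ≤ t}) ∂ρ := by
        rw [← Finset.sum_congr rfl hj_eq, Finset.sum_const, nsmul_eq_mul]
      have h2 : ∑ j ∈ Cy, ∫⁻ z in {z : Fin (n + 1) → 𝓧 × 𝓨 | ∀ i, (z i).2 = y i},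
            ν (Prod.mk z ⁻¹' {p : (Fin (n + 1) → 𝓧 × 𝓨) × ℝ | G p.1 j p.2 ≤ t}) ∂ρ
          = ENNReal.ofReal (t * Cy.card) * μ {ω | ∀ i, (Z i ω).2 = y i} := by
        rw [← lintegral_finset_sum _ (fun j _ => measurable_measure_prodMk_left (hSmeas j))]
        have hptwise : ∀ z ∈ {z : Fin (n + 1) → 𝓧 × 𝓨 | ∀ i, (z i).2 = y i},
            ∑ j ∈ Cy, ν (Prod.mk z ⁻¹' {p : (Fin (n + 1) → 𝓧 × 𝓨) × ℝ | G p.1 j p.2 ≤ t})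
              = ENNReal.ofReal (t * Cy.card) := by
          intro z hz
          have hzmem : ∀ i, (z i).2 = y i := hz
          have hsets : ∀ j, Prod.mk z ⁻¹' {p : (Fin (n + 1) → 𝓧 × 𝓨) × ℝ | G p.1 j p.2 ≤ t}
              = {u : ℝ | (((Cy.filter fun i => A z i < A z j).card : ℝ)
                  + u * ((Cy.filter fun i => A z i = A z j).card : ℝ)) / (Cy.card : ℝ) ≤ t} := by
            intro j
            have e1 : Finset.univ.filter
                (fun i => (z i).2 = (z (Fin.last n)).2 ∧ A z i < A z j)
                = Cy.filter (fun i => A z i < A z j) := by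
              rw [hCy_def, Finset.filter_filter]
              refine Finset.filter_congr (fun i _ => ?_)
              simp only [hzmem]
            have e2 : Finset.univ.filter
                (fun i => (z i).2 = (z (Fin.last n)).2 ∧ A z i = A z j)
                = Cy.filter (fun i => A z i = A z j) := by
              rw [hCy_def, Finset.filter_filter]
              refine Finset.filter_congr (fun i _ => ?_)
              simp only [hzmem]
            have e3 : Finset.univ.filter (fun i => (z i).2 = (z (Fin.last n)).2) = Cy := by
              rw [hCy_def]
              refine Finset.filter_congr (fun i _ => ?_)
              simp only [hzmem]
            ext u
            simp only [Set.mem_preimage, Set.mem_setOf_eq, hG_def, e1, e2, e3]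
          simp only [hsets, hν_def]
          exact LCP_inner_sum Cy hCyne (fun i => A z i) t ht0 ht1
        rw [setLIntegral_congr_fun (hLymeas y) hptwise,
          setLIntegral_const, hρ_def, Measure.map_apply hZv (hLymeas y)]
        have hpre : Zv ⁻¹' {z : Fin (n + 1) → 𝓧 × 𝓨 | ∀ i, (z i).2 = y i}
            = {ω | ∀ i, (Z i ω).2 = y i} := by
          ext ω
          simp only [Set.mem_preimage, Set.mem_setOf_eq, hZv_def]
        rw [hpre]
      have h3 : (Cy.card : ℝ≥0∞)
            * μ ({ω | G (Zv ω) (Fin.last n) (τ ω) ≤ t} ∩ {ω | ∀ i, (Z i ω).2 = y i})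
          = (Cy.card : ℝ≥0∞) * (ENNReal.ofReal t * μ {ω | ∀ i, (Z i ω).2 = y i}) := by
        rw [h1, h2, ENNReal.ofReal_mul ht0, ENNReal.ofReal_natCast]
        ring
      exact (ENNReal.mul_right_inj
        (Nat.cast_ne_zero.mpr hNpos.ne') (ENNReal.natCast_ne_top _)).mp h3
    have hmeasPt : MeasurableSet {ω | G (Zv ω) (Fin.last n) (τ ω) ≤ t} :=
      measurableSet_le hPmeas measurable_const
    rw [hdecomp _ hmeasPt, Finset.sum_congr rfl (fun y _ => hper y), ← Finset.mul_sum]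
    have hsum1 : ∑ y : Fin (n + 1) → 𝓨, μ {ω | ∀ i, (Z i ω).2 = y i} = 1 := by
      have h := hdecomp Set.univ MeasurableSet.univ
      simp only [Set.univ_inter] at h
      rw [← h, measure_univ]
    rw [hsum1, mul_one]
  -- conclude by comparing CDFs
  have hmapfin : IsProbabilityMeasure (μ.map (fun ω => G (Zv ω) (Fin.last n) (τ ω))) :=
    Measure.isProbabilityMeasure_map hPmeas.aemeasurable
  refine Measure.ext_of_Iic _ _ (fun a => ?_)
  rw [Measure.map_apply hPmeas measurableSet_Iic, LCP_unif_Iic]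
  have hIic : (fun ω => G (Zv ω) (Fin.last n) (τ ω)) ⁻¹' Set.Iic a
      = {ω | G (Zv ω) (Fin.last n) (τ ω) ≤ a} := rfl
  rw [hIic]
  rcases le_total a 0 with ha0 | ha0
  · have h1 : μ {ω | G (Zv ω) (Fin.last n) (τ ω) ≤ a}
        ≤ μ {ω | G (Zv ω) (Fin.last n) (τ ω) ≤ 0} :=
      measure_mono (fun ω h => le_trans h ha0)
    rw [key 0 le_rfl zero_le_one] at h1
    simp only [ENNReal.ofReal_zero, nonpos_iff_eq_zero] at h1
    rw [h1, min_eq_left (le_trans ha0 zero_le_one), ENNReal.ofReal_eq_zero.mpr ha0]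
  · rcases le_total a 1 with ha1 | ha1
    · rw [key a ha0 ha1, min_eq_left ha1]
    · have h1 : μ {ω | G (Zv ω) (Fin.last n) (τ ω) ≤ 1}
          ≤ μ {ω | G (Zv ω) (Fin.last n) (τ ω) ≤ a} :=
        measure_mono (fun ω h => le_trans h ha1)
      rw [key 1 zero_le_one le_rfl] at h1
      have h2 : μ {ω | G (Zv ω) (Fin.last n) (τ ω) ≤ a} ≤ 1 := prob_le_one
      rw [min_eq_right ha1, ENNReal.ofReal_one]
      exact le_antisymm h2 (by simpa using h1)
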